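/- Let ū = (u_i)_{i ∈ I} be a (finite or one-sided infinite) sequence of primitive generalized words over Σ. Then the concatenation Π_{i ∈ I} u_i has as its set of blocks exactly the union of the blocks of the u_i (i.e., ū does not merge) if and only if ū contains no factor matching a left-hand side of the rewriting system R, where R has rules: (u₁, u₂, u₃) → u when u₁ = u₃ = u = Γ^{η} for some Γ ⊆ Σ and u₂ is a single symbol of Γ; (u₁, u₂) → u₁u₂ when u₁ is right-closed and u₂ is left-closed; (u₁, u₂) → Γ^{η} when u₁ = u₂ = Γ^{η}. -/
import Mathlib


section

variable {S : Type*}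

/-- `c : ℚ → S` is the dense `Γ`-coloring of the rationals (the word `Γ^η`). -/
def GammaEta (Γ : Finset S) (c : ℚ → S) : Prop :=
  (∀ x, c x ∈ Γ) ∧ ∀ q r : ℚ, q < r → ∀ a ∈ Γ, ∃ x : ℚ, q < x ∧ x < r ∧ c x = a

variable {α : Type*} [LinearOrder α]

/-- `I` is a uniform subword of the colored order `(α, cc)`: an interval that is
isomorphic, as a colored order, to `Γ^η` for some finite `Γ`. -/
def UniformOn (cc : α → S) (I : Set α) : Prop :=
  I.OrdConnected ∧ ∃ (Γ : Finset S) (d : ℚ → S), GammaEta Γ d ∧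
    ∃ e : I ≃o ℚ, ∀ x : I, d (e x) = cc x

/-- `J` is a (nonempty) successor-closed subword of `(α, cc)`: an interval none
of whose points lies in a uniform subword, closed under existing successors and
predecessors. -/
def SuccClosedOn (cc : α → S) (J : Set α) : Prop :=
  J.OrdConnected ∧ J.Nonempty ∧
    (∀ x ∈ J, ∀ I : Set α, UniformOn cc I → x ∉ I) ∧
    (∀ x ∈ J, ∀ y, (x < y ∧ ∀ z, x < z → y ≤ z) → y ∈ J) ∧
    (∀ x ∈ J, ∀ y, (y < x ∧ ∀ z, z < x → z ≤ y) → y ∈ J)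

/-- A block of `(α, cc)`: a maximal uniform subword or a minimal
successor-closed subword. -/
def IsBlock (cc : α → S) (B : Set α) : Prop :=
  (UniformOn cc B ∧ ∀ I : Set α, UniformOn cc I → B ⊆ I → I = B) ∨
  (SuccClosedOn cc B ∧ ∀ J : Set α, SuccClosedOn cc J → J ⊆ B → J = B)

/-- A generalized word is primitive if it consists of a single block. -/
def Primitive (cc : α → S) : Prop := IsBlock cc Set.univ

/-- The colored order `(α, cc)` is isomorphic to `Γ^η`. -/
def IsoToGammaEta (cc : α → S) (Γ : Finset S) : Prop :=
  ∃ d : ℚ → S, GammaEta Γ d ∧ ∃ e : α ≃o ℚ, ∀ x, d (e x) = cc x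

/-- The colored order `(α, cc)` is a single point colored `a`. -/
def SinglePointWord (cc : α → S) (a : S) : Prop :=
  (∃ x : α, ∀ y : α, y = x) ∧ ∀ x, cc x = a

end

/-! ### Generic helper lemmas -/

section Helpers

variable {S : Type*} {α : Type*} {β : Type*} [LinearOrder α] [LinearOrder β]

/-- Uniform subword with explicit palette `Γ`. -/
def UniformWith (cc : α → S) (Γ : Finset S) (K : Set α) : Prop :=
  K.OrdConnected ∧ ∃ d : ℚ → S, GammaEta Γ d ∧ ∃ e : K ≃o ℚ, ∀ x : K, d (e x) = cc x

theorem uniformOn_iff {cc : α → S} {K : Set α} :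
    UniformOn cc K ↔ ∃ Γ, UniformWith cc Γ K := by
  constructor
  · rintro ⟨h1, Γ, d, hd, e, he⟩; exact ⟨Γ, h1, d, hd, e, he⟩
  · rintro ⟨Γ, h1, d, hd, e, he⟩; exact ⟨h1, Γ, d, hd, e, he⟩

namespace UniformWith

variable {cc : α → S} {Γ : Finset S} {K : Set α}

theorem uniformOn (h : UniformWith cc Γ K) : UniformOn cc K := uniformOn_iff.mpr ⟨Γ, h⟩

theorem ordConnected (h : UniformWith cc Γ K) : K.OrdConnected := h.1

theorem mem_color (h : UniformWith cc Γ K) {x : α} (hx : x ∈ K) : cc x ∈ Γ := by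
  obtain ⟨-, d, hd, e, he⟩ := h
  have := he ⟨x, hx⟩
  rw [← this]; exact hd.1 _

theorem nonempty (h : UniformWith cc Γ K) : K.Nonempty := by
  obtain ⟨-, d, hd, e, he⟩ := h
  exact ⟨(e.symm 0 : K), (e.symm 0).2⟩

theorem exists_gt (h : UniformWith cc Γ K) {x : α} (hx : x ∈ K) : ∃ y ∈ K, x < y := by
  obtain ⟨-, d, hd, e, he⟩ := h
  refine ⟨e.symm (e ⟨x, hx⟩ + 1), (e.symm _).2, ?_⟩
  have : (⟨x, hx⟩ : K) < e.symm (e ⟨x, hx⟩ + 1) := by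
    rw [← e.lt_iff_lt, e.apply_symm_apply]; linarith
  exact this

theorem exists_lt (h : UniformWith cc Γ K) {x : α} (hx : x ∈ K) : ∃ y ∈ K, y < x := by
  obtain ⟨-, d, hd, e, he⟩ := h
  refine ⟨e.symm (e ⟨x, hx⟩ - 1), (e.symm _).2, ?_⟩
  have : e.symm (e ⟨x, hx⟩ - 1) < (⟨x, hx⟩ : K) := by
    rw [← e.lt_iff_lt, e.apply_symm_apply]; linarith
  exact this

theorem exists_between (h : UniformWith cc Γ K) {x y : α} (hx : x ∈ K) (hy : y ∈ K)
    (hxy : x < y) : ∃ z ∈ K, x < z ∧ z < y := by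
  obtain ⟨-, d, hd, e, he⟩ := h
  have hlt : e ⟨x, hx⟩ < e ⟨y, hy⟩ := by rw [e.lt_iff_lt]; exact hxy
  refine ⟨e.symm ((e ⟨x, hx⟩ + e ⟨y, hy⟩) / 2), (e.symm _).2, ?_, ?_⟩
  · have : (⟨x, hx⟩ : K) < e.symm ((e ⟨x, hx⟩ + e ⟨y, hy⟩) / 2) := by
      rw [← e.lt_iff_lt, e.apply_symm_apply]; linarith
    exact this
  · have : e.symm ((e ⟨x, hx⟩ + e ⟨y, hy⟩) / 2) < (⟨y, hy⟩ : K) := by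
      rw [← e.lt_iff_lt, e.apply_symm_apply]; linarith
    exact this

theorem color_dense (h : UniformWith cc Γ K) {x y : α} (hx : x ∈ K) (hy : y ∈ K)
    (hxy : x < y) {a : S} (ha : a ∈ Γ) : ∃ z ∈ K, x < z ∧ z < y ∧ cc z = a := by
  obtain ⟨-, d, hd, e, he⟩ := h
  have hlt : e ⟨x, hx⟩ < e ⟨y, hy⟩ := by rw [e.lt_iff_lt]; exact hxy
  obtain ⟨q, hq1, hq2, hq3⟩ := hd.2 _ _ hlt a ha
  refine ⟨e.symm q, (e.symm q).2, ?_, ?_, ?_⟩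
  · have : (⟨x, hx⟩ : K) < e.symm q := by rw [← e.lt_iff_lt, e.apply_symm_apply]; exact hq1
    exact this
  · have : e.symm q < (⟨y, hy⟩ : K) := by rw [← e.lt_iff_lt, e.apply_symm_apply]; exact hq2
    exact this
  · rw [← he (e.symm q)]; rw [e.apply_symm_apply]; exact hq3

theorem countable (h : UniformWith cc Γ K) : K.Countable := by
  obtain ⟨-, d, hd, e, he⟩ := h
  rw [← Set.countable_coe_iff]
  exact Countable.of_equiv ℚ e.symm.toEquiv

end UniformWith

/-- Build a uniform subword from interval/density properties. -/
theorem uniformWith_of_props (cc : α → S) (Γ : Finset S) (U : Set α)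
    (hoc : U.OrdConnected) (hcnt : U.Countable) (hnb : U.Nonempty)
    (hnomax : ∀ x ∈ U, ∃ y ∈ U, x < y) (hnomin : ∀ x ∈ U, ∃ y ∈ U, y < x)
    (hdense : ∀ x ∈ U, ∀ y ∈ U, x < y → ∃ z ∈ U, x < z ∧ z < y)
    (hmem : ∀ x ∈ U, cc x ∈ Γ)
    (hcd : ∀ x ∈ U, ∀ y ∈ U, x < y → ∀ a ∈ Γ, ∃ z ∈ U, x < z ∧ z < y ∧ cc z = a) :
    UniformWith cc Γ U := by
  haveI : Countable U := hcnt.to_subtype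
  haveI : Nonempty U := hnb.to_subtype
  haveI : DenselyOrdered U := by
    constructor
    rintro ⟨x, hx⟩ ⟨y, hy⟩ hxy
    obtain ⟨z, hz, h1, h2⟩ := hdense x hx y hy hxy
    exact ⟨⟨z, hz⟩, h1, h2⟩
  haveI : NoMaxOrder U := by
    constructor
    rintro ⟨x, hx⟩
    obtain ⟨y, hy, h1⟩ := hnomax x hx
    exact ⟨⟨y, hy⟩, h1⟩
  haveI : NoMinOrder U := by
    constructor
    rintro ⟨x, hx⟩
    obtain ⟨y, hy, h1⟩ := hnomin x hx
    exact ⟨⟨y, hy⟩, h1⟩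
  obtain ⟨e⟩ := Order.iso_of_countable_dense U ℚ
  refine ⟨hoc, fun q => cc (e.symm q), ⟨fun q => hmem _ (e.symm q).2, ?_⟩, e, ?_⟩
  · intro q r hqr a ha
    have hlt : e.symm q < e.symm r := by rw [e.symm.lt_iff_lt]; exact hqr
    obtain ⟨z, hz, h1, h2, h3⟩ := hcd _ (e.symm q).2 _ (e.symm r).2 hlt a ha
    refine ⟨e ⟨z, hz⟩, ?_, ?_, ?_⟩
    · rw [← e.apply_symm_apply q, e.lt_iff_lt]; exact h1
    · rw [← e.apply_symm_apply r, e.lt_iff_lt]; exact h2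
    · show cc ((e.symm (e ⟨z, hz⟩) : U) : α) = a
      rw [e.symm_apply_apply]; exact h3
  · intro x
    show cc ((e.symm (e x) : U) : α) = cc (x : α)
    rw [e.symm_apply_apply]

end Helpers

section Transport

variable {S : Type*} {α : Type*} {β : Type*} [LinearOrder α] [LinearOrder β]
variable {ca : α → S} {cb : β → S} {Γ : Finset S}

theorem UniformWith.image (f : α → β) (hf : StrictMono f)
    (hr : (Set.range f).OrdConnected) (hcol : ∀ x, cb (f x) = ca x)
    {A : Set α} (h : UniformWith ca Γ A) : UniformWith cb Γ (f '' A) := by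
  obtain ⟨hoc, d, hd, e, he⟩ := h
  have hoc' : (f '' A).OrdConnected := by
    constructor
    rintro _ ⟨x, hx, rfl⟩ _ ⟨y, hy, rfl⟩ z hz
    obtain ⟨w, rfl⟩ := hr.out ⟨x, rfl⟩ ⟨y, rfl⟩ hz
    have hw : w ∈ Set.Icc x y := ⟨hf.le_iff_le.mp hz.1, hf.le_iff_le.mp hz.2⟩
    exact ⟨w, hoc.out hx hy hw, rfl⟩
  let g : A → (f '' A) := fun x => ⟨f x, Set.mem_image_of_mem f x.2⟩
  have hg : StrictMono g := fun x y hxy => by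
    show (⟨f x, _⟩ : (f '' A)) < ⟨f y, _⟩
    exact Subtype.mk_lt_mk.mpr (hf hxy)
  have hgs : Function.Surjective g := by
    rintro ⟨_, x, hx, rfl⟩
    exact ⟨⟨x, hx⟩, rfl⟩
  let j := StrictMono.orderIsoOfSurjective g hg hgs
  refine ⟨hoc', d, hd, j.symm.trans e, ?_⟩
  intro z
  have : (j (j.symm z) : β) = (z : β) := by rw [j.apply_symm_apply]
  have hz : f ((j.symm z : A) : α) = (z : β) := this
  show d (e (j.symm z)) = cb z
  rw [he (j.symm z), ← hcol, hz]

theorem UniformWith.preimage (f : α → β) (hf : StrictMono f)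
    (hcol : ∀ x, cb (f x) = ca x)
    {K : Set β} (hK : K ⊆ Set.range f) (h : UniformWith cb Γ K) :
    UniformWith ca Γ (f ⁻¹' K) := by
  obtain ⟨hoc, d, hd, e, he⟩ := h
  have hoc' : (f ⁻¹' K).OrdConnected := by
    constructor
    intro x hx y hy z hz
    exact hoc.out hx hy ⟨hf.le_iff_le.mpr hz.1, hf.le_iff_le.mpr hz.2⟩
  let g : (f ⁻¹' K) → K := fun x => ⟨f x, x.2⟩
  have hg : StrictMono g := fun x y hxy => by
    show (⟨f x, _⟩ : K) < ⟨f y, _⟩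
    exact Subtype.mk_lt_mk.mpr (hf hxy)
  have hgs : Function.Surjective g := by
    rintro ⟨z, hz⟩
    obtain ⟨x, rfl⟩ := hK hz
    exact ⟨⟨x, hz⟩, rfl⟩
  let j := StrictMono.orderIsoOfSurjective g hg hgs
  refine ⟨hoc', d, hd, j.trans e, ?_⟩
  intro x
  show d (e (j x)) = ca x
  rw [he (j x)]
  have : ((j x : K) : β) = f x := rfl
  rw [this, hcol]

theorem palette_subset {cc : α → S} {Γ₁ Γ₂ : Finset S} {A B : Set α} {x y : α}
    (h₁ : UniformWith cc Γ₁ A) (h₂ : UniformWith cc Γ₂ B)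
    (hxA : x ∈ A) (hyA : y ∈ A) (hxB : x ∈ B) (hyB : y ∈ B) (hxy : x < y) : Γ₁ ⊆ Γ₂ := by
  intro a ha
  obtain ⟨z, hz, h1, h2, h3⟩ := h₁.color_dense hxA hyA hxy ha
  have hzB : z ∈ B := h₂.ordConnected.out hxB hyB ⟨le_of_lt h1, le_of_lt h2⟩
  rw [← h3]
  exact h₂.mem_color hzB

theorem palette_eq {cc : α → S} {Γ₁ Γ₂ : Finset S} {A B : Set α} {x y : α}
    (h₁ : UniformWith cc Γ₁ A) (h₂ : UniformWith cc Γ₂ B)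
    (hxA : x ∈ A) (hyA : y ∈ A) (hxB : x ∈ B) (hyB : y ∈ B) (hxy : x < y) : Γ₁ = Γ₂ :=
  le_antisymm (palette_subset h₁ h₂ hxA hyA hxB hyB hxy)
    (palette_subset h₂ h₁ hxB hyB hxA hyA hxy)

/-- `UniformWith` on `univ` is the same as `IsoToGammaEta`. -/
theorem uniformWith_univ_iff {cc : α → S} {Γ : Finset S} :
    UniformWith cc Γ Set.univ ↔ IsoToGammaEta cc Γ := by
  constructor
  · rintro ⟨-, d, hd, e, he⟩
    exact ⟨d, hd, (OrderIso.Set.univ (α := α)).symm.trans e, fun x => he _⟩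
  · rintro ⟨d, hd, e, he⟩
    exact ⟨Set.ordConnected_univ, d, hd, (OrderIso.Set.univ (α := α)).trans e,
      fun x => he _⟩

/-- Blocks of a primitive word: only `univ`. -/
theorem block_eq_univ_of_primitive {cc : α → S} (hp : Primitive cc) {B : Set α}
    (hB : IsBlock cc B) : B = Set.univ := by
  rcases hp with ⟨hu, _⟩ | ⟨hs, hmin⟩
  · rcases hB with ⟨hBu, hBmax⟩ | ⟨hBs, -⟩
    · exact (hBmax Set.univ hu (Set.subset_univ B)).symm
    · obtain ⟨x, hx⟩ := hBs.2.1
      exact absurd (Set.mem_univ x) (hBs.2.2.1 x hx Set.univ hu)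
  · rcases hB with ⟨hBu, -⟩ | ⟨hBs, -⟩
    · obtain ⟨Γ, hW⟩ := uniformOn_iff.mp hBu
      obtain ⟨x, hx⟩ := hW.nonempty
      exact absurd hBu (fun h => hs.2.2.1 x (Set.mem_univ x) B h hx)
    · exact hmin B hBs (Set.subset_univ B)

end Transport
set_option linter.unusedSectionVars false

section SigmaW

variable {S : Type*} {I : Set ℤ} {F : ℤ → Type*} [∀ i, LinearOrder (F i)]

def embW (I : Set ℤ) (F : ℤ → Type*) (i : ℤ) (hi : i ∈ I) (y : F i) : Σₗ i : I, F i.1 :=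
  toLex ⟨⟨i, hi⟩, y⟩

theorem embW_rep (x : Σₗ i : I, F i.1) :
    x = embW I F (ofLex x).1.1 (ofLex x).1.2 (ofLex x).2 := rfl

theorem embW_lt_same {i : ℤ} {hi : i ∈ I} {a b : F i} :
    embW I F i hi a < embW I F i hi b ↔ a < b := by
  rw [embW, embW, Sigma.Lex.lt_def]
  show ((⟨⟨i, hi⟩, a⟩ : Σ i : I, F i.1).1 < (⟨⟨i, hi⟩, b⟩ : Σ i : I, F i.1).1 ∨ _) ↔ _
  simp only [lt_self_iff_false, false_or]
  exact ⟨fun h => h.2, fun h => ⟨rfl, h⟩⟩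

theorem embW_le_same {i : ℤ} {hi : i ∈ I} {a b : F i} :
    embW I F i hi a ≤ embW I F i hi b ↔ a ≤ b := by
  rw [embW, embW, Sigma.Lex.le_def]
  show ((⟨⟨i, hi⟩, a⟩ : Σ i : I, F i.1).1 < (⟨⟨i, hi⟩, b⟩ : Σ i : I, F i.1).1 ∨ _) ↔ _
  simp only [lt_self_iff_false, false_or]
  exact ⟨fun h => h.2, fun h => ⟨rfl, h⟩⟩

theorem embW_lt_of_index_lt {i j : ℤ} {hi : i ∈ I} {hj : j ∈ I} (h : i < j)
    (a : F i) (b : F j) : embW I F i hi a < embW I F j hj b := by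
  rw [embW, embW, Sigma.Lex.lt_def]
  exact Or.inl (by exact_mod_cast h)

theorem index_le_of_le {i j : ℤ} {hi : i ∈ I} {hj : j ∈ I} {a : F i} {b : F j}
    (h : embW I F i hi a ≤ embW I F j hj b) : i ≤ j := by
  rw [embW, embW, Sigma.Lex.le_def] at h
  rcases h with h | ⟨h, -⟩
  · exact le_of_lt (by exact_mod_cast h)
  · exact le_of_eq (congrArg Subtype.val h)

theorem index_le_of_lt {i j : ℤ} {hi : i ∈ I} {hj : j ∈ I} {a : F i} {b : F j}
    (h : embW I F i hi a < embW I F j hj b) : i ≤ j :=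
  index_le_of_le (le_of_lt h)

theorem index_eq_of_emb_eq {i j : ℤ} {hi : i ∈ I} {hj : j ∈ I} {a : F i} {b : F j}
    (h : embW I F i hi a = embW I F j hj b) : i = j := by
  have := congrArg (fun x : Σₗ i : I, F i.1 => ((ofLex x).1 : ℤ)) h
  exact this

theorem embW_strictMono {i : ℤ} {hi : i ∈ I} : StrictMono (embW I F i hi) :=
  fun _ _ h => embW_lt_same.mpr h

theorem embW_injective {i : ℤ} {hi : i ∈ I} : Function.Injective (embW I F i hi) :=
  embW_strictMono.injective

/-- the `i`-th component, as a subset of the concatenation. -/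
theorem range_embW_ordConnected {i : ℤ} {hi : i ∈ I} :
    (Set.range (embW I F i hi)).OrdConnected := by
  constructor
  rintro _ ⟨a, rfl⟩ _ ⟨b, rfl⟩ z hz
  rw [embW_rep z] at hz ⊢
  have h1 := index_le_of_le hz.1
  have h2 := index_le_of_le hz.2
  have : ((ofLex z).1 : ℤ) = i := le_antisymm h2 h1
  subst this
  exact ⟨(ofLex z).2, rfl⟩

theorem mem_range_embW {i : ℤ} {hi : i ∈ I} {x : Σₗ i : I, F i.1} :
    x ∈ Set.range (embW I F i hi) ↔ ((ofLex x).1 : ℤ) = i := by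
  constructor
  · rintro ⟨a, rfl⟩; rfl
  · intro h
    rw [embW_rep x]
    subst h
    exact ⟨(ofLex x).2, rfl⟩

end SigmaW
section SigmaW2

set_option linter.unusedSectionVars false

variable {S : Type*} {I : Set ℤ} {F : ℤ → Type*} [∀ i, LinearOrder (F i)]

def cW (I : Set ℤ) {S : Type*} {F : ℤ → Type*} (c : ∀ i : ℤ, F i → S) :
    (Σₗ i : I, F i.1) → S :=
  fun x => c (ofLex x).1.1 (ofLex x).2

variable {c : ∀ i : ℤ, F i → S}

theorem cW_embW {i : ℤ} {hi : i ∈ I} (a : F i) : cW I c (embW I F i hi a) = c i a := rfl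

/-- successors in a component are successors in the concatenation -/
theorem embW_succ {i : ℤ} {hi : i ∈ I} {a b : F i}
    (h : a < b ∧ ∀ z, a < z → b ≤ z) :
    embW I F i hi a < embW I F i hi b ∧
      ∀ z, embW I F i hi a < z → embW I F i hi b ≤ z := by
  refine ⟨embW_lt_same.mpr h.1, ?_⟩
  intro z hz
  rw [embW_rep z] at hz ⊢
  set k := ((ofLex z).1 : ℤ) with hk
  have hik : i ≤ k := index_le_of_lt hz
  rcases lt_or_eq_of_le hik with hik' | hik'
  · exact le_of_lt (embW_lt_of_index_lt hik' _ _)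
  · subst hik'
    have : a < (ofLex z).2 := embW_lt_same.mp hz
    exact embW_le_same.mpr (h.2 _ this)

/-- predecessors in a component are predecessors in the concatenation -/
theorem embW_pred {i : ℤ} {hi : i ∈ I} {a b : F i}
    (h : b < a ∧ ∀ z, z < a → z ≤ b) :
    embW I F i hi b < embW I F i hi a ∧
      ∀ z, z < embW I F i hi a → z ≤ embW I F i hi b := by
  refine ⟨embW_lt_same.mpr h.1, ?_⟩
  intro z hz
  rw [embW_rep z] at hz ⊢
  have hik : ((ofLex z).1 : ℤ) ≤ i := index_le_of_lt hz
  rcases lt_or_eq_of_le hik with hik' | hik'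
  · exact le_of_lt (embW_lt_of_index_lt hik' _ _)
  · subst hik'
    have : (ofLex z).2 < a := embW_lt_same.mp hz
    exact embW_le_same.mpr (h.2 _ this)

theorem comp_uniform {i : ℤ} {hi : i ∈ I} {Γ : Finset S}
    (h : UniformWith (c i) Γ Set.univ) :
    UniformWith (cW I c) Γ (Set.range (embW I F i hi)) := by
  have := h.image (embW I F i hi) embW_strictMono range_embW_ordConnected
    (fun a => cW_embW a)
  rwa [Set.image_univ] at this

theorem comp_comap {i : ℤ} {hi : i ∈ I} {Γ : Finset S} {K : Set (Σₗ i : I, F i.1)}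
    (hK : K ⊆ Set.range (embW I F i hi)) (h : UniformWith (cW I c) Γ K) :
    UniformWith (c i) Γ (embW I F i hi ⁻¹' K) :=
  h.preimage (embW I F i hi) embW_strictMono (fun a => cW_embW a) hK

theorem uniform_image' {i : ℤ} {hi : i ∈ I} {Γ : Finset S} {A : Set (F i)}
    (h : UniformWith (c i) Γ A) :
    UniformWith (cW I c) Γ (embW I F i hi '' A) :=
  h.image (embW I F i hi) embW_strictMono range_embW_ordConnected (fun a => cW_embW a)

/-- interval hypothesis on `I` -/
def IntervalI (I : Set ℤ) : Prop := ∀ a ∈ I, ∀ b ∈ I, ∀ m : ℤ, a ≤ m → m ≤ b → m ∈ I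

/-- successors stay in the component, given rule 1 irreducibility -/
theorem succ_stays (hIiv : IntervalI I) (hne : ∀ i ∈ I, Nonempty (F i))
    (hR1 : ∀ i : ℤ, i ∈ I → i + 1 ∈ I →
      ¬ ((∃ mx : F i, ∀ x, x ≤ mx) ∧ (∃ mn : F (i + 1), ∀ x, mn ≤ x)))
    {i k : ℤ} {hi : i ∈ I} {hk : k ∈ I} {a : F i} {b : F k}
    (h : embW I F i hi a < embW I F k hk b ∧
      ∀ z, embW I F i hi a < z → embW I F k hk b ≤ z) : k = i := by
  by_contra hne'
  have hik : i < k := lt_of_le_of_ne (index_le_of_lt h.1) (Ne.symm hne')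
  have hmax : ∀ a' : F i, a' ≤ a := by
    intro a'
    by_contra h'
    push_neg at h'
    have := h.2 (embW I F i hi a') (embW_lt_same.mpr h')
    have := index_le_of_le this
    omega
  have hi1 : i + 1 ∈ I := hIiv i hi k hk (i + 1) (by omega) (by omega)
  have hmin : ∃ mn : F (i + 1), ∀ x, mn ≤ x := by
    obtain ⟨z0⟩ := hne (i + 1) hi1
    have hz0 := h.2 (embW I F (i + 1) hi1 z0) (embW_lt_of_index_lt (by omega) _ _)
    have hk1 : k = i + 1 := by have := index_le_of_le hz0; omega
    subst hk1
    refine ⟨b, fun z => ?_⟩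
    have hz := h.2 (embW I F (i + 1) hi1 z) (embW_lt_of_index_lt (by omega) _ _)
    exact embW_le_same.mp hz
  exact hR1 i hi hi1 ⟨⟨a, hmax⟩, hmin⟩

/-- predecessors stay in the component, given rule 1 irreducibility -/
theorem pred_stays (hIiv : IntervalI I) (hne : ∀ i ∈ I, Nonempty (F i))
    (hR1 : ∀ i : ℤ, i ∈ I → i + 1 ∈ I →
      ¬ ((∃ mx : F i, ∀ x, x ≤ mx) ∧ (∃ mn : F (i + 1), ∀ x, mn ≤ x)))
    {i k : ℤ} {hi : i ∈ I} {hk : k ∈ I} {a : F i} {b : F k}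
    (h : embW I F k hk b < embW I F i hi a ∧
      ∀ z, z < embW I F i hi a → z ≤ embW I F k hk b) : k = i := by
  by_contra hne'
  have hik : k < i := lt_of_le_of_ne (index_le_of_lt h.1) hne'
  have hmin : ∀ a' : F i, a ≤ a' := by
    intro a'
    by_contra h'
    push_neg at h'
    have := h.2 (embW I F i hi a') (embW_lt_same.mpr h')
    have := index_le_of_le this
    omega
  obtain ⟨j, rfl⟩ : ∃ j, i = j + 1 := ⟨i - 1, by ring⟩
  have hj : j ∈ I := hIiv k hk (j + 1) hi j (by omega) (by omega)
  have hmax : ∃ mx : F j, ∀ x, x ≤ mx := by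
    obtain ⟨z0⟩ := hne j hj
    have hz0 := h.2 (embW I F j hj z0) (embW_lt_of_index_lt (by omega) _ _)
    have hkj : k = j := by have := index_le_of_le hz0; omega
    subst hkj
    refine ⟨b, fun z => ?_⟩
    have hz := h.2 (embW I F k hk z) (embW_lt_of_index_lt (by omega) _ _)
    exact embW_le_same.mp hz
  exact hR1 j hj hi ⟨hmax, ⟨a, hmin⟩⟩

end SigmaW2
section NoSpan

set_option linter.unusedSectionVars false

variable {S : Type*} {I : Set ℤ} {F : ℤ → Type*} [∀ i, LinearOrder (F i)]
variable {c : ∀ i : ℤ, F i → S}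

theorem comp_palette (hprim : ∀ i ∈ I, Primitive (c i)) {Γ : Finset S}
    {K : Set (Σₗ i : I, F i.1)} (hK : UniformWith (cW I c) Γ K)
    {k : ℤ} {hk : k ∈ I} {p q : F k}
    (hp : embW I F k hk p ∈ K) (hq : embW I F k hk q ∈ K) (hpq : p < q) :
    IsoToGammaEta (c k) Γ := by
  set V : Set (Σₗ i : I, F i.1) := Set.Ioo (embW I F k hk p) (embW I F k hk q) with hV
  have hVK : V ⊆ K := fun z hz => hK.ordConnected.out hp hq ⟨hz.1.le, hz.2.le⟩
  have hVr : V ⊆ Set.range (embW I F k hk) := fun z hz =>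
    range_embW_ordConnected.out ⟨p, rfl⟩ ⟨q, rfl⟩ ⟨hz.1.le, hz.2.le⟩
  have hVu : UniformWith (cW I c) Γ V := by
    refine uniformWith_of_props _ _ _ Set.ordConnected_Ioo (hK.countable.mono hVK) ?_ ?_ ?_ ?_
      (fun z hz => hK.mem_color (hVK hz)) ?_
    · obtain ⟨z, hz, h1, h2⟩ := hK.exists_between hp hq (embW_lt_same.mpr hpq)
      exact ⟨z, h1, h2⟩
    · intro z hz
      obtain ⟨w, hw, h1, h2⟩ := hK.exists_between (hVK hz) hq hz.2
      exact ⟨w, ⟨hz.1.trans h1, h2⟩, h1⟩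
    · intro z hz
      obtain ⟨w, hw, h1, h2⟩ := hK.exists_between hp (hVK hz) hz.1
      exact ⟨w, ⟨h1, h2.trans hz.2⟩, h2⟩
    · intro x hx y hy hxy
      obtain ⟨w, hw, h1, h2⟩ := hK.exists_between (hVK hx) (hVK hy) hxy
      exact ⟨w, ⟨hx.1.trans h1, h2.trans hy.2⟩, h1, h2⟩
    · intro x hx y hy hxy a ha
      obtain ⟨w, hw, h1, h2, h3⟩ := hK.color_dense (hVK hx) (hVK hy) hxy ha
      exact ⟨w, ⟨hx.1.trans h1, h2.trans hy.2⟩, h1, h2, h3⟩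
  have hV' : UniformWith (c k) Γ (embW I F k hk ⁻¹' V) := comp_comap hVr hVu
  obtain ⟨z, hz⟩ := hVu.nonempty
  obtain ⟨z2, hz2, hzz⟩ := hVu.exists_gt hz
  obtain ⟨p1, rfl⟩ := hVr hz
  obtain ⟨p2, rfl⟩ := hVr hz2
  have hp12 : p1 < p2 := embW_lt_same.mp hzz
  rcases hprim k hk with ⟨hu, -⟩ | ⟨hs, -⟩
  · obtain ⟨Γk, hWk⟩ := uniformOn_iff.mp hu
    have hΓ : Γ = Γk := palette_eq hV' hWk hz hz2 (Set.mem_univ p1) (Set.mem_univ p2) hp12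
    rw [hΓ] at hV' ⊢
    exact uniformWith_univ_iff.mp hWk
  · exact absurd hz (hs.2.2.1 p1 (Set.mem_univ p1) _ hV'.uniformOn)

end NoSpan
section NoSpan2

set_option linter.unusedSectionVars false

variable {S : Type*} {I : Set ℤ} {F : ℤ → Type*} [∀ i, LinearOrder (F i)]
variable {c : ∀ i : ℤ, F i → S}

theorem exists_rep (w : Σₗ i : I, F i.1) :
    ∃ (k : ℤ) (hk : k ∈ I) (v : F k), w = embW I F k hk v :=
  ⟨(ofLex w).1.1, (ofLex w).1.2, (ofLex w).2, embW_rep w⟩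

theorem no_span_adj (hIiv : IntervalI I) (hne : ∀ i ∈ I, Nonempty (F i))
    (hprim : ∀ i ∈ I, Primitive (c i))
    (hR2 : ∀ i : ℤ, i ∈ I → i + 1 ∈ I →
      ¬ ∃ Γ : Finset S, IsoToGammaEta (c i) Γ ∧ IsoToGammaEta (c (i + 1)) Γ)
    (hR3 : ∀ i : ℤ, i ∈ I → i + 1 ∈ I → i + 2 ∈ I →
      ¬ ∃ (Γ : Finset S) (a : S), a ∈ Γ ∧ IsoToGammaEta (c i) Γ ∧
        SinglePointWord (c (i + 1)) a ∧ IsoToGammaEta (c (i + 2)) Γ)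
    {Γ : Finset S} {K : Set (Σₗ i : I, F i.1)} (hK : UniformWith (cW I c) Γ K)
    {i : ℤ} (hi : i ∈ I) (hi1 : i + 1 ∈ I) {a : F i} {b : F (i + 1)}
    (hxK : embW I F i hi a ∈ K) (hyK : embW I F (i + 1) hi1 b ∈ K) : False := by
  have hxy : embW I F i hi a < embW I F (i + 1) hi1 b :=
    embW_lt_of_index_lt (by omega) _ _
  by_cases hTi : ∃ p q : F i, embW I F i hi p ∈ K ∧ embW I F i hi q ∈ K ∧ p < q
  · by_cases hTj : ∃ p q : F (i + 1),
        embW I F (i + 1) hi1 p ∈ K ∧ embW I F (i + 1) hi1 q ∈ K ∧ p < q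
    · -- rule 2 violated
      obtain ⟨p, q, h1, h2, h3⟩ := hTi
      obtain ⟨p', q', h1', h2', h3'⟩ := hTj
      exact hR2 i hi hi1
        ⟨Γ, comp_palette hprim hK h1 h2 h3, comp_palette hprim hK h1' h2' h3'⟩
    · -- the trace on component `i+1` is the single point `b`; rule 3 at `i`
      push_neg at hTj
      have hsingK : ∀ p : F (i + 1), embW I F (i + 1) hi1 p ∈ K → p = b := by
        intro p hp
        rcases lt_trichotomy p b with h | h | h
        · exact absurd h (not_lt.mpr (hTj p b hp hyK))
        · exact h
        · exact absurd h (not_lt.mpr (hTj b p hyK hp))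
      obtain ⟨w, hwK, hyw⟩ := hK.exists_gt hyK
      obtain ⟨k, hkI, w2, rfl⟩ := exists_rep w
      have hk_le : i + 1 ≤ k := index_le_of_lt hyw
      have hk_lt : i + 1 < k := by
        rcases eq_or_lt_of_le hk_le with h | h
        · exfalso
          subst h
          exact absurd (hsingK w2 hwK ▸ hyw) (lt_irrefl _)
        · exact h
      have hFj : ∀ p : F (i + 1), p = b := by
        intro p
        rcases lt_trichotomy p b with h | h | h
        · refine hsingK p (hK.ordConnected.out hxK hyK ⟨?_, ?_⟩)
          · exact (embW_lt_of_index_lt (by omega) _ _).le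
          · exact (embW_lt_same.mpr h).le
        · exact h
        · refine hsingK p (hK.ordConnected.out hyK hwK ⟨?_, ?_⟩)
          · exact (embW_lt_same.mpr h).le
          · exact (embW_lt_of_index_lt (by omega) _ _).le
      have hsp : SinglePointWord (c (i + 1)) (c (i + 1) b) :=
        ⟨⟨b, hFj⟩, fun z => by rw [hFj z]⟩
      have hi2 : i + 2 ∈ I := hIiv (i + 1) hi1 k hkI (i + 2) (by omega) (by omega)
      have hbase : ∃ r : F (i + 2), embW I F (i + 2) hi2 r ∈ K := by
        rcases eq_or_lt_of_le (show i + 2 ≤ k by omega) with h | h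
        · subst h
          exact ⟨w2, hwK⟩
        · obtain ⟨r⟩ := hne (i + 2) hi2
          refine ⟨r, hK.ordConnected.out hyK hwK ⟨?_, ?_⟩⟩
          · exact (embW_lt_of_index_lt (by omega) _ _).le
          · exact (embW_lt_of_index_lt (by omega) _ _).le
      obtain ⟨r0, hr0⟩ := hbase
      have hr1 : ∃ r1, embW I F (i + 2) hi2 r1 ∈ K ∧ r1 < r0 := by
        by_contra h'
        push_neg at h'
        have hmin : ∀ r', r0 ≤ r' := by
          intro r'
          by_contra h''
          push_neg at h''
          have mem : embW I F (i + 2) hi2 r' ∈ K := by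
            refine hK.ordConnected.out hyK hr0 ⟨?_, ?_⟩
            · exact (embW_lt_of_index_lt (by omega) _ _).le
            · exact (embW_lt_same.mpr h'').le
          exact absurd h'' (not_lt.mpr (h' r' mem))
        obtain ⟨z, hzK, hz1, hz2⟩ :=
          hK.exists_between hyK hr0 (embW_lt_of_index_lt (by omega) _ _)
        obtain ⟨k', hk', z2, rfl⟩ := exists_rep z
        have h1 : i + 1 ≤ k' := index_le_of_lt hz1
        have h2 : k' ≤ i + 2 := index_le_of_lt hz2
        rcases (by omega : k' = i + 1 ∨ k' = i + 2) with h | h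
        · subst h
          exact absurd (hFj z2 ▸ hz1) (lt_irrefl _)
        · subst h
          exact absurd (embW_lt_same.mp hz2) (not_lt.mpr (hmin z2))
      obtain ⟨r1, hr1K, hr10⟩ := hr1
      obtain ⟨p, q, h1, h2, h3⟩ := hTi
      have iso_i : IsoToGammaEta (c i) Γ := comp_palette hprim hK h1 h2 h3
      have iso_i2 : IsoToGammaEta (c (i + 2)) Γ := comp_palette hprim hK hr1K hr0 hr10
      have haΓ : c (i + 1) b ∈ Γ := hK.mem_color hyK
      exact hR3 i hi hi1 hi2 ⟨Γ, c (i + 1) b, haΓ, iso_i, hsp, iso_i2⟩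
  · -- the trace on component `i` is the single point `a`; rule 3 at `i-1`
    push_neg at hTi
    have hsingK : ∀ p : F i, embW I F i hi p ∈ K → p = a := by
      intro p hp
      rcases lt_trichotomy p a with h | h | h
      · exact absurd h (not_lt.mpr (hTi p a hp hxK))
      · exact h
      · exact absurd h (not_lt.mpr (hTi a p hxK hp))
    obtain ⟨w, hwK, hwx⟩ := hK.exists_lt hxK
    obtain ⟨k, hkI, w2, rfl⟩ := exists_rep w
    have hk_le : k ≤ i := index_le_of_lt hwx
    have hk_lt : k < i := by
      rcases eq_or_lt_of_le hk_le with h | h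
      · exfalso
        subst h
        exact absurd (hsingK w2 hwK ▸ hwx) (lt_irrefl _)
      · exact h
    have hFi : ∀ p : F i, p = a := by
      intro p
      rcases lt_trichotomy p a with h | h | h
      · refine hsingK p (hK.ordConnected.out hwK hxK ⟨?_, ?_⟩)
        · exact (embW_lt_of_index_lt (by omega) _ _).le
        · exact (embW_lt_same.mpr h).le
      · exact h
      · refine hsingK p (hK.ordConnected.out hxK hyK ⟨?_, ?_⟩)
        · exact (embW_lt_same.mpr h).le
        · exact (embW_lt_of_index_lt (by omega) _ _).le
    have hsp : SinglePointWord (c i) (c i a) := ⟨⟨a, hFi⟩, fun z => by rw [hFi z]⟩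
    have him : i - 1 ∈ I := hIiv k hkI i hi (i - 1) (by omega) (by omega)
    have hbase : ∃ r : F (i - 1), embW I F (i - 1) him r ∈ K := by
      rcases eq_or_lt_of_le (show k ≤ i - 1 by omega) with h | h
      · subst h
        exact ⟨w2, hwK⟩
      · obtain ⟨r⟩ := hne (i - 1) him
        refine ⟨r, hK.ordConnected.out hwK hxK ⟨?_, ?_⟩⟩
        · exact (embW_lt_of_index_lt (by omega) _ _).le
        · exact (embW_lt_of_index_lt (by omega) _ _).le
    obtain ⟨r0, hr0⟩ := hbase
    have hr1 : ∃ r1, embW I F (i - 1) him r1 ∈ K ∧ r0 < r1 := by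
      by_contra h'
      push_neg at h'
      have hmax : ∀ r', r' ≤ r0 := by
        intro r'
        by_contra h''
        push_neg at h''
        have mem : embW I F (i - 1) him r' ∈ K := by
          refine hK.ordConnected.out hr0 hxK ⟨?_, ?_⟩
          · exact (embW_lt_same.mpr h'').le
          · exact (embW_lt_of_index_lt (by omega) _ _).le
        exact absurd h'' (not_lt.mpr (h' r' mem))
      obtain ⟨z, hzK, hz1, hz2⟩ :=
        hK.exists_between hr0 hxK (embW_lt_of_index_lt (by omega) _ _)
      obtain ⟨k', hk', z2, rfl⟩ := exists_rep z
      have h1 : i - 1 ≤ k' := index_le_of_lt hz1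
      have h2 : k' ≤ i := index_le_of_lt hz2
      rcases (by omega : k' = i - 1 ∨ k' = i) with h | h
      · subst h
        exact absurd (embW_lt_same.mp hz1) (not_lt.mpr (hmax z2))
      · subst h
        exact absurd (hFi z2 ▸ hz2) (lt_irrefl _)
    obtain ⟨r1, hr1K, hr01⟩ := hr1
    have iso_im : IsoToGammaEta (c (i - 1)) Γ := comp_palette hprim hK hr0 hr1K hr01
    -- two points in the trace of component `i+1`
    have hTj2 : ∃ z2 : F (i + 1), embW I F (i + 1) hi1 z2 ∈ K ∧ z2 < b := by
      obtain ⟨z, hzK, hz1, hz2⟩ := hK.exists_between hxK hyK hxy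
      obtain ⟨k', hk', z2, rfl⟩ := exists_rep z
      have h1 : i ≤ k' := index_le_of_lt hz1
      have h2 : k' ≤ i + 1 := index_le_of_lt hz2
      rcases (by omega : k' = i ∨ k' = i + 1) with h | h
      · subst h
        exact absurd (hFi z2 ▸ hz1) (lt_irrefl _)
      · subst h
        exact ⟨z2, hzK, embW_lt_same.mp hz2⟩
    obtain ⟨z2, hz2K, hz2b⟩ := hTj2
    have iso_i1 : IsoToGammaEta (c (i + 1)) Γ := comp_palette hprim hK hz2K hyK hz2b
    have haΓ : c i a ∈ Γ := hK.mem_color hxK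
    refine hR3 (i - 1) him ?_ ?_ ⟨Γ, c i a, haΓ, iso_im, ?_, ?_⟩
    · rw [show i - 1 + 1 = i by ring]; exact hi
    · rw [show i - 1 + 2 = i + 1 by ring]; exact hi1
    · rw [show i - 1 + 1 = i by ring]; exact hsp
    · rw [show i - 1 + 2 = i + 1 by ring]; exact iso_i1

theorem no_span (hIiv : IntervalI I) (hne : ∀ i ∈ I, Nonempty (F i))
    (hprim : ∀ i ∈ I, Primitive (c i))
    (hR2 : ∀ i : ℤ, i ∈ I → i + 1 ∈ I →
      ¬ ∃ Γ : Finset S, IsoToGammaEta (c i) Γ ∧ IsoToGammaEta (c (i + 1)) Γ)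
    (hR3 : ∀ i : ℤ, i ∈ I → i + 1 ∈ I → i + 2 ∈ I →
      ¬ ∃ (Γ : Finset S) (a : S), a ∈ Γ ∧ IsoToGammaEta (c i) Γ ∧
        SinglePointWord (c (i + 1)) a ∧ IsoToGammaEta (c (i + 2)) Γ)
    {Γ : Finset S} {K : Set (Σₗ i : I, F i.1)} (hK : UniformWith (cW I c) Γ K)
    {x y : Σₗ i : I, F i.1} (hx : x ∈ K) (hy : y ∈ K) :
    ((ofLex x).1 : ℤ) = ((ofLex y).1 : ℤ) := by
  have key : ∀ x y : Σₗ i : I, F i.1, x ∈ K → y ∈ K →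
      ((ofLex x).1 : ℤ) < ((ofLex y).1 : ℤ) → False := by
    clear hx hy x y
    intro x y hx hy hlt
    obtain ⟨i, hiI, ax, rfl⟩ := exists_rep x
    obtain ⟨j, hjI, ay, rfl⟩ := exists_rep y
    have hij : i < j := hlt
    have hi1 : i + 1 ∈ I := hIiv i hiI j hjI (i + 1) (by omega) (by omega)
    rcases eq_or_lt_of_le (show i + 1 ≤ j by omega) with h | h
    · subst h
      exact no_span_adj hIiv hne hprim hR2 hR3 hK hiI hi1 hx hy
    · obtain ⟨z0⟩ := hne (i + 1) hi1
      have hz : embW I F (i + 1) hi1 z0 ∈ K := by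
        refine hK.ordConnected.out hx hy ⟨?_, ?_⟩
        · exact (embW_lt_of_index_lt (by omega) _ _).le
        · exact (embW_lt_of_index_lt (by omega) _ _).le
      exact no_span_adj hIiv hne hprim hR2 hR3 hK hiI hi1 hx hz
  rcases lt_trichotomy ((ofLex x).1 : ℤ) ((ofLex y).1 : ℤ) with h | h | h
  · exact absurd (key x y hx hy h) id
  · exact h
  · exact absurd (key y x hy hx h) id

end NoSpan2
section Blocks

set_option linter.unusedSectionVars false

variable {S : Type*} {I : Set ℤ} {F : ℤ → Type*} [∀ i, LinearOrder (F i)]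
variable {c : ∀ i : ℤ, F i → S}

theorem succ_trace {i : ℤ} {hi : i ∈ I} {B : Set (Σₗ i : I, F i.1)}
    (hB : SuccClosedOn (cW I c) B) (x0 : F i) (hx0 : embW I F i hi x0 ∈ B) :
    SuccClosedOn (c i) (embW I F i hi ⁻¹' B) := by
  refine ⟨?_, ⟨x0, hx0⟩, ?_, ?_, ?_⟩
  · constructor
    intro x hx y hy z hz
    exact hB.1.out hx hy ⟨embW_le_same.mpr hz.1, embW_le_same.mpr hz.2⟩
  · intro x hx Iu hIu hmem
    obtain ⟨Γ', hW'⟩ := uniformOn_iff.mp hIu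
    exact hB.2.2.1 (embW I F i hi x) hx _ (uniform_image' (hi := hi) hW').uniformOn
      (Set.mem_image_of_mem _ hmem)
  · intro x hx y hy
    exact hB.2.2.2.1 (embW I F i hi x) hx (embW I F i hi y) (embW_succ hy)
  · intro x hx y hy
    exact hB.2.2.2.2 (embW I F i hi x) hx (embW I F i hi y) (embW_pred hy)

theorem comp_succClosed (hIiv : IntervalI I) (hne : ∀ i ∈ I, Nonempty (F i))
    (hprim : ∀ i ∈ I, Primitive (c i))
    (hR1 : ∀ i : ℤ, i ∈ I → i + 1 ∈ I →
      ¬ ((∃ mx : F i, ∀ x, x ≤ mx) ∧ (∃ mn : F (i + 1), ∀ x, mn ≤ x)))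
    (hR2 : ∀ i : ℤ, i ∈ I → i + 1 ∈ I →
      ¬ ∃ Γ : Finset S, IsoToGammaEta (c i) Γ ∧ IsoToGammaEta (c (i + 1)) Γ)
    (hR3 : ∀ i : ℤ, i ∈ I → i + 1 ∈ I → i + 2 ∈ I →
      ¬ ∃ (Γ : Finset S) (a : S), a ∈ Γ ∧ IsoToGammaEta (c i) Γ ∧
        SinglePointWord (c (i + 1)) a ∧ IsoToGammaEta (c (i + 2)) Γ)
    {i : ℤ} {hi : i ∈ I} (hs : SuccClosedOn (c i) Set.univ) :
    SuccClosedOn (cW I c) (Set.range (embW I F i hi)) := by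
  refine ⟨range_embW_ordConnected, ?_, ?_, ?_, ?_⟩
  · obtain ⟨v⟩ := hne i hi
    exact ⟨embW I F i hi v, v, rfl⟩
  · rintro _ ⟨v, rfl⟩ K hKu hmem
    obtain ⟨Γ', hK'⟩ := uniformOn_iff.mp hKu
    have hKr : K ⊆ Set.range (embW I F i hi) := by
      intro z hz
      exact mem_range_embW.mpr (no_span hIiv hne hprim hR2 hR3 hK' hz hmem)
    exact hs.2.2.1 v (Set.mem_univ v) _ (comp_comap hKr hK').uniformOn hmem
  · rintro _ ⟨v, rfl⟩ y hy
    obtain ⟨k, hk, w, rfl⟩ := exists_rep y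
    have := succ_stays hIiv hne hR1 (hi := hi) (hk := hk) hy
    subst this
    exact ⟨w, rfl⟩
  · rintro _ ⟨v, rfl⟩ y hy
    obtain ⟨k, hk, w, rfl⟩ := exists_rep y
    have := pred_stays hIiv hne hR1 (hi := hi) (hk := hk) hy
    subst this
    exact ⟨w, rfl⟩

theorem comp_isBlock (hIiv : IntervalI I) (hne : ∀ i ∈ I, Nonempty (F i))
    (hprim : ∀ i ∈ I, Primitive (c i))
    (hR1 : ∀ i : ℤ, i ∈ I → i + 1 ∈ I →
      ¬ ((∃ mx : F i, ∀ x, x ≤ mx) ∧ (∃ mn : F (i + 1), ∀ x, mn ≤ x)))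
    (hR2 : ∀ i : ℤ, i ∈ I → i + 1 ∈ I →
      ¬ ∃ Γ : Finset S, IsoToGammaEta (c i) Γ ∧ IsoToGammaEta (c (i + 1)) Γ)
    (hR3 : ∀ i : ℤ, i ∈ I → i + 1 ∈ I → i + 2 ∈ I →
      ¬ ∃ (Γ : Finset S) (a : S), a ∈ Γ ∧ IsoToGammaEta (c i) Γ ∧
        SinglePointWord (c (i + 1)) a ∧ IsoToGammaEta (c (i + 2)) Γ)
    (i : ℤ) (hi : i ∈ I) : IsBlock (cW I c) (Set.range (embW I F i hi)) := by
  rcases hprim i hi with ⟨hu, -⟩ | ⟨hs, -⟩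
  · obtain ⟨Γi, hWi⟩ := uniformOn_iff.mp hu
    left
    refine ⟨(comp_uniform (hi := hi) hWi).uniformOn, ?_⟩
    intro K hKu hsub
    obtain ⟨Γ', hK'⟩ := uniformOn_iff.mp hKu
    obtain ⟨v⟩ := hne i hi
    have hmem : embW I F i hi v ∈ K := hsub ⟨v, rfl⟩
    refine Set.Subset.antisymm ?_ hsub
    intro z hz
    exact mem_range_embW.mpr (no_span hIiv hne hprim hR2 hR3 hK' hz hmem)
  · right
    refine ⟨comp_succClosed hIiv hne hprim hR1 hR2 hR3 hs, ?_⟩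
    intro J hJ hsub
    obtain ⟨w, hw⟩ := hJ.2.1
    obtain ⟨v, rfl⟩ := hsub hw
    have hJ' := succ_trace hJ v hw
    rcases hprim i hi with ⟨hu', -⟩ | ⟨-, hmin⟩
    · exfalso
      obtain ⟨Γi, hWi⟩ := uniformOn_iff.mp hu'
      exact hJ.2.2.1 (embW I F i hi v) hw _ (comp_uniform (hi := hi) hWi).uniformOn ⟨v, rfl⟩
    · have huni : embW I F i hi ⁻¹' J = Set.univ := hmin _ hJ' (Set.subset_univ _)
      refine Set.Subset.antisymm hsub ?_
      rintro _ ⟨u, rfl⟩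
      have : u ∈ embW I F i hi ⁻¹' J := huni ▸ Set.mem_univ u
      exact this

theorem block_classify (hIiv : IntervalI I) (hne : ∀ i ∈ I, Nonempty (F i))
    (hprim : ∀ i ∈ I, Primitive (c i))
    (hR1 : ∀ i : ℤ, i ∈ I → i + 1 ∈ I →
      ¬ ((∃ mx : F i, ∀ x, x ≤ mx) ∧ (∃ mn : F (i + 1), ∀ x, mn ≤ x)))
    (hR2 : ∀ i : ℤ, i ∈ I → i + 1 ∈ I →
      ¬ ∃ Γ : Finset S, IsoToGammaEta (c i) Γ ∧ IsoToGammaEta (c (i + 1)) Γ)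
    (hR3 : ∀ i : ℤ, i ∈ I → i + 1 ∈ I → i + 2 ∈ I →
      ¬ ∃ (Γ : Finset S) (a : S), a ∈ Γ ∧ IsoToGammaEta (c i) Γ ∧
        SinglePointWord (c (i + 1)) a ∧ IsoToGammaEta (c (i + 2)) Γ)
    {B : Set (Σₗ i : I, F i.1)} (hB : IsBlock (cW I c) B) :
    ∃ (i : ℤ) (hi : i ∈ I) (B' : Set (F i)), IsBlock (c i) B' ∧
      B = embW I F i hi '' B' := by
  rcases hB with ⟨hBu, hBmax⟩ | ⟨hBs, hBmin⟩
  · obtain ⟨Γ, hW⟩ := uniformOn_iff.mp hBu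
    obtain ⟨x, hx⟩ := hW.nonempty
    obtain ⟨i, hi, v, rfl⟩ := exists_rep x
    have hBr : B ⊆ Set.range (embW I F i hi) := fun z hz =>
      mem_range_embW.mpr (no_span hIiv hne hprim hR2 hR3 hW hz hx)
    refine ⟨i, hi, embW I F i hi ⁻¹' B, ?_,
      (Set.image_preimage_eq_of_subset hBr).symm⟩
    left
    refine ⟨(comp_comap hBr hW).uniformOn, ?_⟩
    intro I' hI' hsub
    obtain ⟨Γ'', hI''⟩ := uniformOn_iff.mp hI'
    have himg := uniform_image' (hi := hi) hI''
    have hBsub : B ⊆ embW I F i hi '' I' := by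
      intro z hz
      obtain ⟨u, rfl⟩ := hBr hz
      exact Set.mem_image_of_mem _ (hsub hz)
    have heq : embW I F i hi '' I' = B := hBmax _ himg.uniformOn hBsub
    calc I' = embW I F i hi ⁻¹' (embW I F i hi '' I') :=
          (Set.preimage_image_eq I' embW_injective).symm
      _ = embW I F i hi ⁻¹' B := by rw [heq]
  · obtain ⟨x, hx⟩ := hBs.2.1
    obtain ⟨i, hi, v, rfl⟩ := exists_rep x
    have hT := succ_trace hBs v hx
    rcases hprim i hi with ⟨hu, -⟩ | ⟨hs, hmin⟩
    · exfalso
      obtain ⟨Γi, hWi⟩ := uniformOn_iff.mp hu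
      exact hBs.2.2.1 (embW I F i hi v) hx _ (comp_uniform (hi := hi) hWi).uniformOn ⟨v, rfl⟩
    · have huni : embW I F i hi ⁻¹' B = Set.univ := hmin _ hT (Set.subset_univ _)
      have hcomp : Set.range (embW I F i hi) ⊆ B := by
        rintro _ ⟨u, rfl⟩
        have : u ∈ embW I F i hi ⁻¹' B := huni ▸ Set.mem_univ u
        exact this
      have hsc := comp_succClosed hIiv hne hprim hR1 hR2 hR3 (hi := hi) hs
      have hBeq : Set.range (embW I F i hi) = B := hBmin _ hsc hcomp
      exact ⟨i, hi, Set.univ, hprim i hi, by rw [Set.image_univ, hBeq]⟩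

end Blocks
section MergeConstructions

set_option linter.unusedSectionVars false

variable {S : Type*} {I : Set ℤ} {F : ℤ → Type*} [∀ i, LinearOrder (F i)]
variable {c : ∀ i : ℤ, F i → S}

theorem not_block_of_rule1 {i : ℤ} (hi : i ∈ I) (hi1 : i + 1 ∈ I)
    (hmx : ∃ mx : F i, ∀ x, x ≤ mx) (hmn : ∃ mn : F (i + 1), ∀ x, mn ≤ x)
    (hblk : IsBlock (cW I c) (Set.range (embW I F i hi))) : False := by
  obtain ⟨mx, hmax⟩ := hmx
  obtain ⟨mn, hmin⟩ := hmn
  rcases hblk with ⟨hu, -⟩ | ⟨hs, -⟩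
  · obtain ⟨Γ, hW⟩ := uniformOn_iff.mp hu
    obtain ⟨y, hy, hlt⟩ := hW.exists_gt ⟨mx, rfl⟩
    obtain ⟨b, rfl⟩ := hy
    exact absurd (embW_lt_same.mp hlt) (not_lt.mpr (hmax b))
  · have hpair : embW I F i hi mx < embW I F (i + 1) hi1 mn ∧
        ∀ z, embW I F i hi mx < z → embW I F (i + 1) hi1 mn ≤ z := by
      refine ⟨embW_lt_of_index_lt (by omega) _ _, ?_⟩
      intro z hz
      obtain ⟨k, hk, w, rfl⟩ := exists_rep z
      have hik : i ≤ k := index_le_of_lt hz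
      rcases eq_or_lt_of_le hik with h | h
      · exfalso
        subst h
        exact absurd (embW_lt_same.mp hz) (not_lt.mpr (hmax w))
      · rcases eq_or_lt_of_le (show i + 1 ≤ k by omega) with h' | h'
        · subst h'
          exact embW_le_same.mpr (hmin w)
        · exact (embW_lt_of_index_lt h' _ _).le
    have hmem := hs.2.2.2.1 (embW I F i hi mx) ⟨mx, rfl⟩ _ hpair
    have : (i : ℤ) + 1 = i := mem_range_embW.mp hmem
    omega

end MergeConstructions
section Rule2Merge

set_option linter.unusedSectionVars false

variable {S : Type*} {I : Set ℤ} {F : ℤ → Type*} [∀ i, LinearOrder (F i)]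
variable {c : ∀ i : ℤ, F i → S}

theorem embW_cast {k l : ℤ} (h : k = l) (hk : k ∈ I) (v : F k) :
    embW I F k hk v = embW I F l (h ▸ hk) (h ▸ v) := by subst h; rfl

theorem not_block_of_rule2 {i : ℤ} (hi : i ∈ I) (hi1 : i + 1 ∈ I) {Γ : Finset S}
    (h0 : IsoToGammaEta (c i) Γ) (h1 : IsoToGammaEta (c (i + 1)) Γ)
    (hblk : IsBlock (cW I c) (Set.range (embW I F i hi))) : False := by
  have hW0 : UniformWith (c i) Γ Set.univ := uniformWith_univ_iff.mpr h0
  have hW1 : UniformWith (c (i + 1)) Γ Set.univ := uniformWith_univ_iff.mpr h1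
  set U : Set (Σₗ i : I, F i.1) :=
    Set.range (embW I F i hi) ∪ Set.range (embW I F (i + 1) hi1) with hU
  have memU : ∀ (k : ℤ) (hk : k ∈ I) (v : F k),
      embW I F k hk v ∈ U ↔ (k = i ∨ k = i + 1) := by
    intro k hk v
    constructor
    · rintro (h | h)
      · exact Or.inl (mem_range_embW.mp h)
      · exact Or.inr (mem_range_embW.mp h)
    · rintro (rfl | rfl)
      · exact Or.inl ⟨v, rfl⟩
      · exact Or.inr ⟨v, rfl⟩
  obtain ⟨v0, -⟩ := hW0.nonempty
  obtain ⟨v1, -⟩ := hW1.nonempty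
  have hUu : UniformWith (cW I c) Γ U := by
    refine uniformWith_of_props _ _ _ ?_ ?_ ⟨embW I F i hi v0, (memU _ _ _).mpr (Or.inl rfl)⟩
      ?_ ?_ ?_ ?_ ?_
    · -- ordConnected
      constructor
      intro x hx y hy z hz
      obtain ⟨kx, hkx, vx, rfl⟩ := exists_rep x
      obtain ⟨ky, hky, vy, rfl⟩ := exists_rep y
      obtain ⟨kz, hkz, vz, rfl⟩ := exists_rep z
      have e1 := index_le_of_le hz.1
      have e2 := index_le_of_le hz.2
      have hx' := (memU _ _ _).mp hx
      have hy' := (memU _ _ _).mp hy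
      exact (memU _ _ _).mpr (by omega)
    · -- countable
      have c0 : (Set.range (embW I F i hi)).Countable := by
        rw [← Set.image_univ]; exact hW0.countable.image _
      have c1 : (Set.range (embW I F (i + 1) hi1)).Countable := by
        rw [← Set.image_univ]; exact hW1.countable.image _
      exact c0.union c1
    · -- no max
      intro z hz
      obtain ⟨kz, hkz, vz, rfl⟩ := exists_rep z
      rcases (memU _ _ _).mp hz with rfl | rfl
      · exact ⟨embW I F (kz + 1) hi1 v1, (memU _ _ _).mpr (Or.inr rfl),
          embW_lt_of_index_lt (by omega) _ _⟩
      · obtain ⟨w, -, hw⟩ := hW1.exists_gt (Set.mem_univ vz)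
        exact ⟨embW I F (i + 1) hi1 w, (memU _ _ _).mpr (Or.inr rfl), embW_lt_same.mpr hw⟩
    · -- no min
      intro z hz
      obtain ⟨kz, hkz, vz, rfl⟩ := exists_rep z
      rcases (memU _ _ _).mp hz with rfl | rfl
      · obtain ⟨w, -, hw⟩ := hW0.exists_lt (Set.mem_univ vz)
        exact ⟨embW I F kz hkz w, (memU _ _ _).mpr (Or.inl rfl), embW_lt_same.mpr hw⟩
      · exact ⟨embW I F i hi v0, (memU _ _ _).mpr (Or.inl rfl),
          embW_lt_of_index_lt (by omega) _ _⟩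
    · -- dense
      intro x hx y hy hxy
      obtain ⟨kx, hkx, vx, rfl⟩ := exists_rep x
      obtain ⟨ky, hky, vy, rfl⟩ := exists_rep y
      have hle : kx ≤ ky := index_le_of_lt hxy
      rcases (memU _ _ _).mp hx with h0 | h0 <;> rcases (memU _ _ _).mp hy with h1 | h1
      · rw [embW_cast h0 hkx vx, embW_cast h1 hky vy] at hxy
        obtain ⟨w, -, hw1, hw2⟩ := hW0.exists_between (Set.mem_univ _) (Set.mem_univ _)
          (embW_lt_same.mp hxy)
        refine ⟨embW I F i hi w, (memU _ _ _).mpr (Or.inl rfl), ?_, ?_⟩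
        · rw [embW_cast h0 hkx vx]; exact embW_lt_same.mpr hw1
        · rw [embW_cast h1 hky vy]; exact embW_lt_same.mpr hw2
      · obtain ⟨w, -, hw⟩ := hW0.exists_gt (Set.mem_univ (h0 ▸ vx))
        refine ⟨embW I F i hi w, (memU _ _ _).mpr (Or.inl rfl), ?_,
          embW_lt_of_index_lt (by omega) _ _⟩
        · rw [embW_cast h0 hkx vx]; exact embW_lt_same.mpr hw
      · omega
      · rw [embW_cast h0 hkx vx, embW_cast h1 hky vy] at hxy
        obtain ⟨w, -, hw1, hw2⟩ := hW1.exists_between (Set.mem_univ _) (Set.mem_univ _)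
          (embW_lt_same.mp hxy)
        refine ⟨embW I F (i + 1) hi1 w, (memU _ _ _).mpr (Or.inr rfl), ?_, ?_⟩
        · rw [embW_cast h0 hkx vx]; exact embW_lt_same.mpr hw1
        · rw [embW_cast h1 hky vy]; exact embW_lt_same.mpr hw2
    · -- colors
      intro z hz
      obtain ⟨kz, hkz, vz, rfl⟩ := exists_rep z
      rcases (memU _ _ _).mp hz with rfl | rfl
      · exact hW0.mem_color (Set.mem_univ vz)
      · exact hW1.mem_color (Set.mem_univ vz)
    · -- color density
      intro x hx y hy hxy a ha
      obtain ⟨kx, hkx, vx, rfl⟩ := exists_rep x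
      obtain ⟨ky, hky, vy, rfl⟩ := exists_rep y
      have hle : kx ≤ ky := index_le_of_lt hxy
      rcases (memU _ _ _).mp hx with h0 | h0 <;> rcases (memU _ _ _).mp hy with h1 | h1
      · rw [embW_cast h0 hkx vx, embW_cast h1 hky vy] at hxy
        obtain ⟨w, -, hw1, hw2, hw3⟩ := hW0.color_dense (Set.mem_univ _) (Set.mem_univ _)
          (embW_lt_same.mp hxy) ha
        refine ⟨embW I F i hi w, (memU _ _ _).mpr (Or.inl rfl), ?_, ?_, hw3⟩
        · rw [embW_cast h0 hkx vx]; exact embW_lt_same.mpr hw1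
        · rw [embW_cast h1 hky vy]; exact embW_lt_same.mpr hw2
      · obtain ⟨w, -, hw⟩ := hW0.exists_gt (Set.mem_univ (h0 ▸ vx))
        obtain ⟨w', -, hw1, hw2, hw3⟩ := hW0.color_dense (Set.mem_univ (h0 ▸ vx))
          (Set.mem_univ w) hw ha
        refine ⟨embW I F i hi w', (memU _ _ _).mpr (Or.inl rfl), ?_,
          embW_lt_of_index_lt (by omega) _ _, hw3⟩
        · rw [embW_cast h0 hkx vx]; exact embW_lt_same.mpr hw1
      · omega
      · rw [embW_cast h0 hkx vx, embW_cast h1 hky vy] at hxy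
        obtain ⟨w, -, hw1, hw2, hw3⟩ := hW1.color_dense (Set.mem_univ _) (Set.mem_univ _)
          (embW_lt_same.mp hxy) ha
        refine ⟨embW I F (i + 1) hi1 w, (memU _ _ _).mpr (Or.inr rfl), ?_, ?_, hw3⟩
        · rw [embW_cast h0 hkx vx]; exact embW_lt_same.mpr hw1
        · rw [embW_cast h1 hky vy]; exact embW_lt_same.mpr hw2
  rcases hblk with ⟨-, hmax⟩ | ⟨hs, -⟩
  · have heq := hmax U hUu.uniformOn Set.subset_union_left
    have : embW I F (i + 1) hi1 v1 ∈ Set.range (embW I F i hi) := by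
      rw [← heq]; exact (memU _ _ _).mpr (Or.inr rfl)
    have : (i : ℤ) + 1 = i := mem_range_embW.mp this
    omega
  · exact hs.2.2.1 (embW I F i hi v0) ⟨v0, rfl⟩ U hUu.uniformOn
      ((memU _ _ _).mpr (Or.inl rfl))

end Rule2Merge
section Rule3Merge

set_option linter.unusedSectionVars false

variable {S : Type*} {I : Set ℤ} {F : ℤ → Type*} [∀ i, LinearOrder (F i)]
variable {c : ∀ i : ℤ, F i → S}

theorem not_block_of_rule3 {i : ℤ} (hi : i ∈ I) (hi1 : i + 1 ∈ I) (hi2 : i + 2 ∈ I)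
    {Γ : Finset S} {a : S} (ha : a ∈ Γ)
    (h0 : IsoToGammaEta (c i) Γ) (hsp : SinglePointWord (c (i + 1)) a)
    (h2 : IsoToGammaEta (c (i + 2)) Γ)
    (hblk : IsBlock (cW I c) (Set.range (embW I F i hi))) : False := by
  have hW0 : UniformWith (c i) Γ Set.univ := uniformWith_univ_iff.mpr h0
  have hW2 : UniformWith (c (i + 2)) Γ Set.univ := uniformWith_univ_iff.mpr h2
  obtain ⟨⟨p, hp⟩, hcol⟩ := hsp
  set U : Set (Σₗ i : I, F i.1) :=
    Set.range (embW I F i hi) ∪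
      (Set.range (embW I F (i + 1) hi1) ∪ Set.range (embW I F (i + 2) hi2)) with hU
  have memU : ∀ (k : ℤ) (hk : k ∈ I) (v : F k),
      embW I F k hk v ∈ U ↔ (k = i ∨ k = i + 1 ∨ k = i + 2) := by
    intro k hk v
    constructor
    · rintro (h | h | h)
      · exact Or.inl (mem_range_embW.mp h)
      · exact Or.inr (Or.inl (mem_range_embW.mp h))
      · exact Or.inr (Or.inr (mem_range_embW.mp h))
    · rintro (rfl | rfl | rfl)
      · exact Or.inl ⟨v, rfl⟩
      · exact Or.inr (Or.inl ⟨v, rfl⟩)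
      · exact Or.inr (Or.inr ⟨v, rfl⟩)
  obtain ⟨v0, -⟩ := hW0.nonempty
  obtain ⟨v2, -⟩ := hW2.nonempty
  have hUu : UniformWith (cW I c) Γ U := by
    refine uniformWith_of_props _ _ _ ?_ ?_ ⟨embW I F i hi v0, (memU _ _ _).mpr (Or.inl rfl)⟩
      ?_ ?_ ?_ ?_ ?_
    · -- ordConnected
      constructor
      intro x hx y hy z hz
      obtain ⟨kx, hkx, vx, rfl⟩ := exists_rep x
      obtain ⟨ky, hky, vy, rfl⟩ := exists_rep y
      obtain ⟨kz, hkz, vz, rfl⟩ := exists_rep z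
      have e1 := index_le_of_le hz.1
      have e2 := index_le_of_le hz.2
      have hx' := (memU _ _ _).mp hx
      have hy' := (memU _ _ _).mp hy
      exact (memU _ _ _).mpr (by omega)
    · -- countable
      have c0 : (Set.range (embW I F i hi)).Countable := by
        rw [← Set.image_univ]; exact hW0.countable.image _
      have c2 : (Set.range (embW I F (i + 2) hi2)).Countable := by
        rw [← Set.image_univ]; exact hW2.countable.image _
      have c1 : (Set.range (embW I F (i + 1) hi1)).Countable := by
        apply Set.Subsingleton.countable
        rintro _ ⟨v, rfl⟩ _ ⟨w, rfl⟩
        rw [hp v, hp w]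
      exact c0.union (c1.union c2)
    · -- no max
      intro z hz
      obtain ⟨kz, hkz, vz, rfl⟩ := exists_rep z
      rcases (memU _ _ _).mp hz with h | h | h
      · exact ⟨embW I F (i + 2) hi2 v2, (memU _ _ _).mpr (Or.inr (Or.inr rfl)),
          embW_lt_of_index_lt (by omega) _ _⟩
      · exact ⟨embW I F (i + 2) hi2 v2, (memU _ _ _).mpr (Or.inr (Or.inr rfl)),
          embW_lt_of_index_lt (by omega) _ _⟩
      · obtain ⟨w, -, hw⟩ := hW2.exists_gt (Set.mem_univ (h ▸ vz))
        refine ⟨embW I F (i + 2) hi2 w, (memU _ _ _).mpr (Or.inr (Or.inr rfl)), ?_⟩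
        rw [embW_cast h hkz vz]; exact embW_lt_same.mpr hw
    · -- no min
      intro z hz
      obtain ⟨kz, hkz, vz, rfl⟩ := exists_rep z
      rcases (memU _ _ _).mp hz with h | h | h
      · obtain ⟨w, -, hw⟩ := hW0.exists_lt (Set.mem_univ (h ▸ vz))
        refine ⟨embW I F i hi w, (memU _ _ _).mpr (Or.inl rfl), ?_⟩
        rw [embW_cast h hkz vz]; exact embW_lt_same.mpr hw
      · exact ⟨embW I F i hi v0, (memU _ _ _).mpr (Or.inl rfl),
          embW_lt_of_index_lt (by omega) _ _⟩
      · exact ⟨embW I F i hi v0, (memU _ _ _).mpr (Or.inl rfl),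
          embW_lt_of_index_lt (by omega) _ _⟩
    · -- dense
      intro x hx y hy hxy
      obtain ⟨kx, hkx, vx, rfl⟩ := exists_rep x
      obtain ⟨ky, hky, vy, rfl⟩ := exists_rep y
      have hle : kx ≤ ky := index_le_of_lt hxy
      rcases (memU _ _ _).mp hx with h0' | h0' | h0' <;>
        rcases (memU _ _ _).mp hy with h1' | h1' | h1'
      · rw [embW_cast h0' hkx vx, embW_cast h1' hky vy] at hxy
        obtain ⟨w, -, hw1, hw2⟩ := hW0.exists_between (Set.mem_univ _) (Set.mem_univ _)
          (embW_lt_same.mp hxy)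
        refine ⟨embW I F i hi w, (memU _ _ _).mpr (Or.inl rfl), ?_, ?_⟩
        · rw [embW_cast h0' hkx vx]; exact embW_lt_same.mpr hw1
        · rw [embW_cast h1' hky vy]; exact embW_lt_same.mpr hw2
      · obtain ⟨w, -, hw⟩ := hW0.exists_gt (Set.mem_univ (h0' ▸ vx))
        refine ⟨embW I F i hi w, (memU _ _ _).mpr (Or.inl rfl), ?_,
          embW_lt_of_index_lt (by omega) _ _⟩
        rw [embW_cast h0' hkx vx]; exact embW_lt_same.mpr hw
      · obtain ⟨w, -, hw⟩ := hW0.exists_gt (Set.mem_univ (h0' ▸ vx))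
        refine ⟨embW I F i hi w, (memU _ _ _).mpr (Or.inl rfl), ?_,
          embW_lt_of_index_lt (by omega) _ _⟩
        rw [embW_cast h0' hkx vx]; exact embW_lt_same.mpr hw
      · omega
      · rw [embW_cast h0' hkx vx, embW_cast h1' hky vy] at hxy
        have := embW_lt_same.mp hxy
        rw [hp (h0' ▸ vx), hp (h1' ▸ vy)] at this
        exact absurd this (lt_irrefl p)
      · obtain ⟨w, -, hw⟩ := hW2.exists_lt (Set.mem_univ (h1' ▸ vy))
        refine ⟨embW I F (i + 2) hi2 w, (memU _ _ _).mpr (Or.inr (Or.inr rfl)),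
          embW_lt_of_index_lt (by omega) _ _, ?_⟩
        rw [embW_cast h1' hky vy]; exact embW_lt_same.mpr hw
      · omega
      · omega
      · rw [embW_cast h0' hkx vx, embW_cast h1' hky vy] at hxy
        obtain ⟨w, -, hw1, hw2⟩ := hW2.exists_between (Set.mem_univ _) (Set.mem_univ _)
          (embW_lt_same.mp hxy)
        refine ⟨embW I F (i + 2) hi2 w, (memU _ _ _).mpr (Or.inr (Or.inr rfl)), ?_, ?_⟩
        · rw [embW_cast h0' hkx vx]; exact embW_lt_same.mpr hw1
        · rw [embW_cast h1' hky vy]; exact embW_lt_same.mpr hw2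
    · -- colors
      intro z hz
      obtain ⟨kz, hkz, vz, rfl⟩ := exists_rep z
      rcases (memU _ _ _).mp hz with h | h | h
      · rw [embW_cast h hkz vz]
        exact hW0.mem_color (Set.mem_univ _)
      · rw [embW_cast h hkz vz]
        show c (i + 1) (h ▸ vz) ∈ Γ
        rw [hcol]; exact ha
      · rw [embW_cast h hkz vz]
        exact hW2.mem_color (Set.mem_univ _)
    · -- color density
      intro x hx y hy hxy b hb
      obtain ⟨kx, hkx, vx, rfl⟩ := exists_rep x
      obtain ⟨ky, hky, vy, rfl⟩ := exists_rep y
      have hle : kx ≤ ky := index_le_of_lt hxy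
      rcases (memU _ _ _).mp hx with h0' | h0' | h0' <;>
        rcases (memU _ _ _).mp hy with h1' | h1' | h1'
      · rw [embW_cast h0' hkx vx, embW_cast h1' hky vy] at hxy
        obtain ⟨w, -, hw1, hw2, hw3⟩ := hW0.color_dense (Set.mem_univ _) (Set.mem_univ _)
          (embW_lt_same.mp hxy) hb
        refine ⟨embW I F i hi w, (memU _ _ _).mpr (Or.inl rfl), ?_, ?_, hw3⟩
        · rw [embW_cast h0' hkx vx]; exact embW_lt_same.mpr hw1
        · rw [embW_cast h1' hky vy]; exact embW_lt_same.mpr hw2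
      · obtain ⟨w, -, hw⟩ := hW0.exists_gt (Set.mem_univ (h0' ▸ vx))
        obtain ⟨w', -, hw1, hw2, hw3⟩ := hW0.color_dense (Set.mem_univ (h0' ▸ vx))
          (Set.mem_univ w) hw hb
        refine ⟨embW I F i hi w', (memU _ _ _).mpr (Or.inl rfl), ?_,
          embW_lt_of_index_lt (by omega) _ _, hw3⟩
        rw [embW_cast h0' hkx vx]; exact embW_lt_same.mpr hw1
      · obtain ⟨w, -, hw⟩ := hW0.exists_gt (Set.mem_univ (h0' ▸ vx))
        obtain ⟨w', -, hw1, hw2, hw3⟩ := hW0.color_dense (Set.mem_univ (h0' ▸ vx))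
          (Set.mem_univ w) hw hb
        refine ⟨embW I F i hi w', (memU _ _ _).mpr (Or.inl rfl), ?_,
          embW_lt_of_index_lt (by omega) _ _, hw3⟩
        rw [embW_cast h0' hkx vx]; exact embW_lt_same.mpr hw1
      · omega
      · rw [embW_cast h0' hkx vx, embW_cast h1' hky vy] at hxy
        have := embW_lt_same.mp hxy
        rw [hp (h0' ▸ vx), hp (h1' ▸ vy)] at this
        exact absurd this (lt_irrefl p)
      · obtain ⟨w, -, hw⟩ := hW2.exists_lt (Set.mem_univ (h1' ▸ vy))
        obtain ⟨w', -, hw1, hw2, hw3⟩ := hW2.color_dense (Set.mem_univ w)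
          (Set.mem_univ (h1' ▸ vy)) hw hb
        refine ⟨embW I F (i + 2) hi2 w', (memU _ _ _).mpr (Or.inr (Or.inr rfl)),
          embW_lt_of_index_lt (by omega) _ _, ?_, hw3⟩
        rw [embW_cast h1' hky vy]; exact embW_lt_same.mpr hw2
      · omega
      · omega
      · rw [embW_cast h0' hkx vx, embW_cast h1' hky vy] at hxy
        obtain ⟨w, -, hw1, hw2, hw3⟩ := hW2.color_dense (Set.mem_univ _) (Set.mem_univ _)
          (embW_lt_same.mp hxy) hb
        refine ⟨embW I F (i + 2) hi2 w, (memU _ _ _).mpr (Or.inr (Or.inr rfl)), ?_, ?_, hw3⟩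
        · rw [embW_cast h0' hkx vx]; exact embW_lt_same.mpr hw1
        · rw [embW_cast h1' hky vy]; exact embW_lt_same.mpr hw2
  rcases hblk with ⟨-, hmax⟩ | ⟨hs, -⟩
  · have heq := hmax U hUu.uniformOn Set.subset_union_left
    have : embW I F (i + 1) hi1 p ∈ Set.range (embW I F i hi) := by
      rw [← heq]; exact (memU _ _ _).mpr (Or.inr (Or.inl rfl))
    have : (i : ℤ) + 1 = i := mem_range_embW.mp this
    omega
  · exact hs.2.2.1 (embW I F i hi v0) ⟨v0, rfl⟩ U hUu.uniformOn
      ((memU _ _ _).mpr (Or.inl rfl))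

end Rule3Merge

/-- Lemma `lem:merge` (Bloom–Ésik): a finite or one-sided infinite sequence
`ū = (u_i)_{i ∈ I}` of primitive generalized words does not merge — i.e., the
set of blocks of the concatenation `Π_{i ∈ I} u_i` is exactly the union of the
(embedded) blocks of the `u_i` — if and only if `ū` contains no factor matching
a left-hand side of the rewriting system `R`: no adjacent pair with the first
word right-closed and the second left-closed, no adjacent pair `Γ^η, Γ^η`, and
no triple `Γ^η, a, Γ^η` with `a ∈ Γ` a single letter. The index set `I ⊆ ℤ` is
an interval `{0,…,n}`, `{0,1,2,…}` or `{…,-2,-1,0}`. -/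
theorem no_merge_iff_irreducible {S : Type*}
    (I : Set ℤ)
    (hI : (∃ n : ℤ, 0 ≤ n ∧ I = Set.Icc 0 n) ∨ I = Set.Ici 0 ∨ I = Set.Iic 0)
    (F : ℤ → Type*) [∀ i, LinearOrder (F i)]
    (c : ∀ i : ℤ, F i → S)
    (hne : ∀ i ∈ I, Nonempty (F i))
    (hprim : ∀ i ∈ I, Primitive (c i)) :
    -- the blocks of the concatenation are exactly the embedded blocks of the `u_i`
    (∀ B : Set (Σₗ i : I, F i.1),
        IsBlock (fun x : Σₗ i : I, F i.1 => c (ofLex x).1.1 (ofLex x).2) B ↔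
        ∃ (i : ℤ) (hi : i ∈ I) (B' : Set (F i)), IsBlock (c i) B' ∧
          B = (fun y : F i => toLex ⟨⟨i, hi⟩, y⟩) '' B') ↔
    -- irreducibility with respect to the rewriting system `R`
    ((∀ i : ℤ, i ∈ I → i + 1 ∈ I →
        ¬ ((∃ mx : F i, ∀ x, x ≤ mx) ∧ (∃ mn : F (i + 1), ∀ x, mn ≤ x))) ∧
     (∀ i : ℤ, i ∈ I → i + 1 ∈ I →
        ¬ ∃ Γ : Finset S, IsoToGammaEta (c i) Γ ∧ IsoToGammaEta (c (i + 1)) Γ) ∧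
     (∀ i : ℤ, i ∈ I → i + 1 ∈ I → i + 2 ∈ I →
        ¬ ∃ (Γ : Finset S) (a : S), a ∈ Γ ∧ IsoToGammaEta (c i) Γ ∧
          SinglePointWord (c (i + 1)) a ∧ IsoToGammaEta (c (i + 2)) Γ)) := by
  have hIiv : IntervalI I := by
    rcases hI with ⟨n, hn, rfl⟩ | rfl | rfl
    · intro a ha b hb m h1 h2
      simp only [Set.mem_Icc] at *
      omega
    · intro a ha b hb m h1 h2
      simp only [Set.mem_Ici] at *
      omega
    · intro a ha b hb m h1 h2
      simp only [Set.mem_Iic] at *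
      omega
  have hcc : (fun x : Σₗ i : I, F i.1 => c (ofLex x).1.1 (ofLex x).2) = cW I c := rfl
  rw [hcc]
  constructor
  · intro hL
    refine ⟨?_, ?_, ?_⟩
    · intro i hi hi1 h
      obtain ⟨hmx, hmn⟩ := h
      have hblk : IsBlock (cW I c) (Set.range (embW I F i hi)) :=
        (hL _).mpr ⟨i, hi, Set.univ, hprim i hi, by rw [Set.image_univ]; rfl⟩
      exact not_block_of_rule1 hi hi1 hmx hmn hblk
    · intro i hi hi1 h
      obtain ⟨Γ, hg1, hg2⟩ := h
      have hblk : IsBlock (cW I c) (Set.range (embW I F i hi)) :=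
        (hL _).mpr ⟨i, hi, Set.univ, hprim i hi, by rw [Set.image_univ]; rfl⟩
      exact not_block_of_rule2 hi hi1 hg1 hg2 hblk
    · intro i hi hi1 hi2 h
      obtain ⟨Γ, a, ha, hg1, hsp, hg2⟩ := h
      have hblk : IsBlock (cW I c) (Set.range (embW I F i hi)) :=
        (hL _).mpr ⟨i, hi, Set.univ, hprim i hi, by rw [Set.image_univ]; rfl⟩
      exact not_block_of_rule3 hi hi1 hi2 ha hg1 hsp hg2 hblk
  · rintro ⟨hR1, hR2, hR3⟩ B
    constructor
    · intro hB
      exact block_classify hIiv hne hprim hR1 hR2 hR3 hB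
    · rintro ⟨i, hi, B', hB', rfl⟩
      have hBu : B' = Set.univ := block_eq_univ_of_primitive (hprim i hi) hB'
      subst hBu
      have : (fun y : F i => toLex (⟨⟨i, hi⟩, y⟩ : Σ i : I, F i.1)) '' Set.univ =
          Set.range (embW I F i hi) := Set.image_univ
      rw [this]
      exact comp_isBlock hIiv hne hprim hR1 hR2 hR3 i hi
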